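/- arXiv:2409.11772 — 2 statements merged into one kernel-verified Lean document; each statement's English description precedes it below -/
import Mathlib

section
/- If M is an invertible group matrix for a finite group G, then M⁻¹ is also a group matrix for G. -/
variable {G : Type*} [Group G] [Fintype G] [DecidableEq G]

/-- `M` is a group matrix of `G`: `M_{h,h'} = c(h h'⁻¹)` for some `c : G → ℝ`. -/
def IsGroupMatrix (M : Matrix G G ℝ) : Prop :=
  ∃ c : G → ℝ, ∀ h h' : G, M h h' = c (h * h'⁻¹)

/-- The inverse of an invertible group matrix is a group matrix. -/
theorem IsGroupMatrix.inv {M : Matrix G G ℝ}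
    (hM : IsGroupMatrix M) (hinv : IsUnit M) :
    IsGroupMatrix M⁻¹ := by
  obtain ⟨c, hc⟩ := hM
  have key : ∀ g a b : G, M⁻¹ (a * g) (b * g) = M⁻¹ a b := by
    intro g a b
    have hsub : M.submatrix (Equiv.mulRight g) (Equiv.mulRight g) = M := by
      ext x y
      simp only [Matrix.submatrix_apply, Equiv.coe_mulRight]
      rw [hc, hc]; group
    calc M⁻¹ (a * g) (b * g)
        = (M⁻¹.submatrix (Equiv.mulRight g) (Equiv.mulRight g)) a b := rfl
      _ = (M.submatrix (Equiv.mulRight g) (Equiv.mulRight g))⁻¹ a b := by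
          rw [Matrix.inv_submatrix_equiv]
      _ = M⁻¹ a b := by rw [hsub]
  refine ⟨fun g => M⁻¹ g 1, fun h h' => ?_⟩
  have := key h' (h * h'⁻¹) 1
  simpa [mul_assoc] using this
end

section
/- Let G be a finite group, GM the linear subspace of group matrices in ℝ^{G×G}, and M, N ∈ ℝ^{G×G}. Then dist(MN, GM) ≤ max{‖M‖_F, ‖N‖_F} · (dist(M, GM) + dist(N, GM)). -/
variable {G : Type*} [Group G] [Fintype G] [DecidableEq G]

/-- The set of group matrices of `G`. -/
def groupMatrices (G : Type*) [Group G] : Set (Matrix G G ℝ) :=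
  {M | ∃ c : G → ℝ, ∀ h h' : G, M h h' = c (h * h'⁻¹)}

/-- The Frobenius norm of a matrix. -/
noncomputable def frobNorm {α : Type*} [Fintype α] (M : Matrix α α ℝ) : ℝ :=
  Real.sqrt (∑ i, ∑ j, (M i j) ^ 2)

/-- Frobenius distance from a matrix to the set of group matrices. -/
noncomputable def distGM (M : Matrix G G ℝ) : ℝ :=
  sInf {d : ℝ | ∃ M₀ ∈ groupMatrices G, d = frobNorm (M - M₀)}

attribute [local instance] Matrix.frobeniusNormedAddCommGroup Matrix.frobeniusNormedSpace

@[local instance]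
noncomputable def matrixInnerProductSpace {m n : Type*} [Fintype m] [Fintype n] :
    InnerProductSpace ℝ (Matrix m n ℝ) where
  inner x y := inner ℝ (WithLp.toLp 2 fun i => WithLp.toLp 2 (x i))
    (WithLp.toLp 2 fun i => WithLp.toLp 2 (y i))
  norm_sq_eq_re_inner x := norm_sq_eq_re_inner (𝕜 := ℝ) (WithLp.toLp 2 fun i => WithLp.toLp 2 (x i))
  conj_inner_symm x y := inner_conj_symm (𝕜 := ℝ) (WithLp.toLp 2 fun i => WithLp.toLp 2 (x i))
    (WithLp.toLp 2 fun i => WithLp.toLp 2 (y i))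
  add_left x y z := inner_add_left (𝕜 := ℝ) (WithLp.toLp 2 fun i => WithLp.toLp 2 (x i))
    (WithLp.toLp 2 fun i => WithLp.toLp 2 (y i)) (WithLp.toLp 2 fun i => WithLp.toLp 2 (z i))
  smul_left x y r := inner_smul_left (𝕜 := ℝ) (WithLp.toLp 2 fun i => WithLp.toLp 2 (x i))
    (WithLp.toLp 2 fun i => WithLp.toLp 2 (y i)) r

lemma frobNorm_eq_norm {α : Type*} [Fintype α] (M : Matrix α α ℝ) : frobNorm M = ‖M‖ := by
  rw [Matrix.frobenius_norm_def, frobNorm]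
  rw [Real.sqrt_eq_rpow]
  congr 1
  refine Finset.sum_congr rfl fun i _ => Finset.sum_congr rfl fun j _ => ?_
  rw [Real.rpow_two, Real.norm_eq_abs, sq_abs]

/-- Group matrices as a submodule. -/
noncomputable def gmSub (G : Type*) [Group G] [Fintype G] : Submodule ℝ (Matrix G G ℝ) :=
  LinearMap.range
    ({ toFun := fun c => Matrix.of fun h h' => c (h * h'⁻¹)
       map_add' := fun c d => by ext h h'; simp
       map_smul' := fun r c => by ext h h'; simp } : (G → ℝ) →ₗ[ℝ] Matrix G G ℝ)

lemma mem_gmSub_iff (M : Matrix G G ℝ) : M ∈ gmSub G ↔ M ∈ groupMatrices G := by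
  constructor
  · rintro ⟨c, rfl⟩
    exact ⟨c, fun h h' => rfl⟩
  · rintro ⟨c, hc⟩
    exact ⟨c, by ext h h'; exact (hc h h').symm⟩

lemma gm_mul_mem {A B : Matrix G G ℝ} (hA : A ∈ groupMatrices G) (hB : B ∈ groupMatrices G) :
    A * B ∈ groupMatrices G := by
  obtain ⟨c, hc⟩ := hA
  obtain ⟨d, hd⟩ := hB
  refine ⟨fun g => ∑ u, c u * d (u⁻¹ * g), fun h h' => ?_⟩
  rw [Matrix.mul_apply]
  refine Fintype.sum_equiv ((Equiv.inv G).trans (Equiv.mulLeft h)) _ _ fun k => ?_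
  simp only [Equiv.trans_apply, Equiv.inv_apply, Equiv.coe_mulLeft]
  rw [hc, hd]
  congr 2
  group

noncomputable instance : CompleteSpace (gmSub G) :=
  (Submodule.closed_of_finiteDimensional (gmSub G)).completeSpace_coe

noncomputable instance : (gmSub G).HasOrthogonalProjection :=
  Submodule.HasOrthogonalProjection.ofCompleteSpace (gmSub G)

lemma distGM_eq_proj (M : Matrix G G ℝ) :
    distGM M = ‖M - ((gmSub G).orthogonalProjectionOnto M : Matrix G G ℝ)‖ := by
  set v : Matrix G G ℝ := ((gmSub G).orthogonalProjectionOnto M : Matrix G G ℝ)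
  have hv : v ∈ gmSub G := ((gmSub G).orthogonalProjectionOnto M).2
  apply le_antisymm
  · apply csInf_le
    · exact ⟨0, by rintro d ⟨M₀, _, rfl⟩; rw [frobNorm_eq_norm]; exact norm_nonneg _⟩
    · exact ⟨v, (mem_gmSub_iff v).mp hv, (frobNorm_eq_norm _).symm⟩
  · apply le_csInf
    · exact ⟨frobNorm (M - 0), 0, ⟨0, by simp⟩, rfl⟩
    · rintro d ⟨M₀, hM₀, rfl⟩
      rw [frobNorm_eq_norm]
      have h1 := Submodule.starProjection_minimal (U := gmSub G) M
      change ‖M - v‖ = _ at h1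
      rw [h1]
      exact ciInf_le_of_le ⟨0, by rintro x ⟨y, rfl⟩; exact norm_nonneg _⟩
        ⟨M₀, (mem_gmSub_iff M₀).mpr hM₀⟩ le_rfl

lemma norm_proj_le (M : Matrix G G ℝ) :
    ‖((gmSub G).orthogonalProjectionOnto M : Matrix G G ℝ)‖ ≤ ‖M‖ := by
  calc ‖((gmSub G).orthogonalProjectionOnto M : Matrix G G ℝ)‖
      ≤ 1 * ‖M‖ := by
        have := ((gmSub G).orthogonalProjectionOnto).le_of_opNorm_le
          (Submodule.orthogonalProjectionOnto_norm_le (gmSub G)) M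
        exact this
    _ = ‖M‖ := one_mul _

/-- `dist(MN, GM) ≤ max{‖M‖, ‖N‖} (dist(M, GM) + dist(N, GM))`. -/
theorem distGM_mul_le (M N : Matrix G G ℝ) :
    distGM (M * N) ≤ max (frobNorm M) (frobNorm N) * (distGM M + distGM N) := by
  set M₀ : Matrix G G ℝ := ((gmSub G).orthogonalProjectionOnto M : Matrix G G ℝ) with hM₀def
  set N₀ : Matrix G G ℝ := ((gmSub G).orthogonalProjectionOnto N : Matrix G G ℝ) with hN₀def
  have hM₀ : M₀ ∈ groupMatrices G := (mem_gmSub_iff M₀).mp ((gmSub G).orthogonalProjectionOnto M).2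
  have hN₀ : N₀ ∈ groupMatrices G := (mem_gmSub_iff N₀).mp ((gmSub G).orthogonalProjectionOnto N).2
  have hprod : M₀ * N₀ ∈ groupMatrices G := gm_mul_mem hM₀ hN₀
  have hdM : distGM M = ‖M - M₀‖ := distGM_eq_proj M
  have hdN : distGM N = ‖N - N₀‖ := distGM_eq_proj N
  have step1 : distGM (M * N) ≤ ‖M * N - M₀ * N₀‖ := by
    rw [← frobNorm_eq_norm]
    apply csInf_le
    · exact ⟨0, by rintro d ⟨X, _, rfl⟩; rw [frobNorm_eq_norm]; exact norm_nonneg _⟩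
    · exact ⟨M₀ * N₀, hprod, rfl⟩
  have key : ‖M * N - M₀ * N₀‖ ≤ ‖M‖ * ‖N - N₀‖ + ‖M - M₀‖ * ‖N₀‖ := by
    have hsplit : M * N - M₀ * N₀ = M * (N - N₀) + (M - M₀) * N₀ := by
      rw [Matrix.mul_sub, Matrix.sub_mul]; abel
    rw [hsplit]
    calc ‖M * (N - N₀) + (M - M₀) * N₀‖
        ≤ ‖M * (N - N₀)‖ + ‖(M - M₀) * N₀‖ := norm_add_le _ _
      _ ≤ ‖M‖ * ‖N - N₀‖ + ‖M - M₀‖ * ‖N₀‖ := by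
          gcongr <;> exact Matrix.frobenius_norm_mul _ _
  have hN₀le : ‖N₀‖ ≤ ‖N‖ := norm_proj_le N
  have hMmax : ‖M‖ ≤ max (frobNorm M) (frobNorm N) := by
    rw [frobNorm_eq_norm, frobNorm_eq_norm]; exact le_max_left _ _
  have hNmax : ‖N‖ ≤ max (frobNorm M) (frobNorm N) := by
    rw [frobNorm_eq_norm, frobNorm_eq_norm]; exact le_max_right _ _
  calc distGM (M * N) ≤ ‖M‖ * ‖N - N₀‖ + ‖M - M₀‖ * ‖N₀‖ := step1.trans key
    _ ≤ max (frobNorm M) (frobNorm N) * ‖N - N₀‖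
        + ‖M - M₀‖ * max (frobNorm M) (frobNorm N) := by
        have h1 : ‖M‖ * ‖N - N₀‖ ≤ max (frobNorm M) (frobNorm N) * ‖N - N₀‖ :=
          mul_le_mul_of_nonneg_right hMmax (norm_nonneg _)
        have h2 : ‖M - M₀‖ * ‖N₀‖ ≤ ‖M - M₀‖ * max (frobNorm M) (frobNorm N) :=
          mul_le_mul_of_nonneg_left (hN₀le.trans hNmax) (norm_nonneg _)
        exact add_le_add h1 h2
    _ = max (frobNorm M) (frobNorm N) * (distGM M + distGM N) := by
        rw [hdM, hdN]; ring
end
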